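/- Let n ≥ 2, let 0 ≤ a < 1, and let k be an integer with 1 ≤ k ≤ n−1. Then the (n−1)-dimensional Lebesgue measure of the set {(x_1,…,x_{n−1}) ∈ [a,1)^{n−1} : k − 1 < x_1 + ⋯ + x_{n−1} ≤ k − a} equals (1−a)^{n−1} · ( U_{n−1}((k − n·a)/(1−a)) − U_{n−1}((k − n·a)/(1−a) − 1) ). -/

import Mathlib

open MeasureTheory Finset

/-- `U_m(x) = (1/m!) · Σ_{i=0}^{m} (−1)^i C(m,i) max(x − i, 0)^m`. -/
noncomputable def Ufun (m : ℕ) (x : ℝ) : ℝ :=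
  (1 / (m.factorial : ℝ)) *
    ∑ i ∈ Finset.range (m + 1), (-1 : ℝ) ^ i * (m.choose i : ℝ) * max (x - (i : ℝ)) 0 ^ m

open Pointwise

lemma hasDerivAt_maxpow (m : ℕ) (hm : 1 ≤ m) (c x : ℝ) :
    HasDerivAt (fun y : ℝ => max (y - c) 0 ^ (m + 1)) (((m : ℝ) + 1) * max (x - c) 0 ^ m) x := by
  rcases lt_trichotomy x c with h | rfl | h
  · have hev : (fun y : ℝ => max (y - c) 0 ^ (m + 1)) =ᶠ[nhds x] fun _ => (0 : ℝ) := by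
      filter_upwards [eventually_lt_nhds h] with y hy
      rw [max_eq_right (by linarith), zero_pow (by omega)]
    have h0 : max (x - c) 0 = 0 := max_eq_right (by linarith)
    have := (hasDerivAt_const x (0:ℝ)).congr_of_eventuallyEq hev
    simpa [h0, zero_pow (show m ≠ 0 by omega)] using this
  · have h0 : max (x - x) (0:ℝ) = 0 := by simp
    rw [h0, zero_pow (show m ≠ 0 by omega), mul_zero]
    rw [hasDerivAt_iff_tendsto_slope]
    apply squeeze_zero_norm (a := fun y => |y - x| ^ m)
    · intro y
      rw [slope_def_field, h0, zero_pow (show m + 1 ≠ 0 by omega)]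
      rcases le_or_gt y x with hy | hy
      · rw [max_eq_right (by linarith)]
        rw [zero_pow (show m + 1 ≠ 0 by omega)]
        simp only [sub_zero, zero_div, norm_zero]
        positivity
      · rw [max_eq_left (by linarith), sub_zero, pow_succ, mul_div_assoc,
          div_self (by linarith), mul_one]
        rw [Real.norm_eq_abs, abs_pow]
    · have : Filter.Tendsto (fun y : ℝ => |y - x| ^ m) (nhds x) (nhds (|x - x| ^ m)) :=
        (((continuous_id.sub continuous_const).abs.pow m).tendsto x)
      simpa [zero_pow (show m ≠ 0 by omega)] using this.mono_left nhdsWithin_le_nhds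
  · have hev : (fun y : ℝ => max (y - c) 0 ^ (m + 1)) =ᶠ[nhds x] fun y => (y - c) ^ (m + 1) := by
      filter_upwards [eventually_gt_nhds h] with y hy
      rw [max_eq_left (by linarith)]
    have hd : HasDerivAt (fun y : ℝ => (y - c) ^ (m + 1))
        (((m : ℝ) + 1) * (x - c) ^ m) x := by
      have := ((hasDerivAt_id x).sub_const c).pow (m + 1)
      simpa [mul_comm, Pi.pow_def] using this
    have := hd.congr_of_eventuallyEq hev
    simpa [max_eq_left (by linarith : (0:ℝ) ≤ x - c)] using this

noncomputable def Wfun (m : ℕ) (x : ℝ) : ℝ :=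
  (1 / ((m+1).factorial : ℝ)) *
    ∑ i ∈ Finset.range (m + 1), (-1 : ℝ) ^ i * (m.choose i : ℝ) * max (x - (i : ℝ)) 0 ^ (m + 1)

lemma continuous_Ufun (m : ℕ) : Continuous (Ufun m) := by
  unfold Ufun
  apply Continuous.mul continuous_const
  apply continuous_finset_sum
  intro i _
  exact Continuous.mul continuous_const
    (((continuous_id.sub continuous_const).max continuous_const).pow m)

lemma hasDerivAt_Wfun (m : ℕ) (hm : 1 ≤ m) (t : ℝ) :
    HasDerivAt (Wfun m) (Ufun m t) t := by
  have h : HasDerivAt (Wfun m)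
      ((1 / ((m+1).factorial : ℝ)) * ∑ i ∈ Finset.range (m + 1),
        (-1 : ℝ) ^ i * (m.choose i : ℝ) * (((m:ℝ)+1) * max (t - (i : ℝ)) 0 ^ m)) t := by
    apply HasDerivAt.const_mul
    apply HasDerivAt.fun_sum
    intro i _
    exact (hasDerivAt_maxpow m hm (i : ℝ) t).const_mul _
  convert h using 1
  rw [Ufun, Finset.mul_sum, Finset.mul_sum]
  apply Finset.sum_congr rfl
  intro i _
  have hfac : ((m+1).factorial : ℝ) = ((m:ℝ)+1) * (m.factorial : ℝ) := by
    rw [Nat.factorial_succ]; push_cast; ring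
  have h1 : (m.factorial : ℝ) ≠ 0 := Nat.cast_ne_zero.mpr (Nat.factorial_ne_zero m)
  have h2 : ((m:ℝ)+1) ≠ 0 := by positivity
  rw [hfac]
  field_simp [hfac]

lemma pascal_W (m : ℕ) (t : ℝ) : Wfun m t - Wfun m (t - 1) = Ufun (m + 1) t := by
  rw [Wfun, Wfun, Ufun]
  rw [← mul_sub]
  congr 1
  have key : ∑ i ∈ Finset.range (m + 2), (-1:ℝ)^i * ((m+1).choose i : ℝ) * max (t - i) 0 ^ (m+1)
      = (∑ i ∈ Finset.range (m + 1), (-1:ℝ)^i * (m.choose i : ℝ) * max (t - i) 0 ^ (m+1))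
        - ∑ i ∈ Finset.range (m + 1), (-1:ℝ)^i * (m.choose i : ℝ) * max (t - 1 - i) 0 ^ (m+1) := by
    rw [Finset.sum_range_succ' (fun i => (-1:ℝ)^i * ((m+1).choose i : ℝ) * max (t - i) 0 ^ (m+1)) (m+1)]
    have hchoose : ∀ i : ℕ, ((m+1).choose (i+1) : ℝ) = (m.choose i : ℝ) + (m.choose (i+1) : ℝ) := by
      intro i; rw [Nat.choose_succ_succ]; push_cast; ring
    have hsplit : ∑ i ∈ Finset.range (m + 1),
        (-1:ℝ)^(i+1) * ((m+1).choose (i+1) : ℝ) * max (t - (i+1:ℕ)) 0 ^ (m+1)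
        = (∑ i ∈ Finset.range (m + 1), (-1:ℝ)^(i+1) * (m.choose (i+1) : ℝ) * max (t - (i+1:ℕ)) 0 ^ (m+1))
          + ∑ i ∈ Finset.range (m + 1), (-1:ℝ)^(i+1) * (m.choose i : ℝ) * max (t - (i+1:ℕ)) 0 ^ (m+1) := by
      rw [← Finset.sum_add_distrib]
      apply Finset.sum_congr rfl
      intro i _
      rw [hchoose i]; ring
    rw [hsplit]
    have hA : ∑ i ∈ Finset.range (m + 1), (-1:ℝ)^(i+1) * (m.choose (i+1) : ℝ) * max (t - (i+1:ℕ)) 0 ^ (m+1)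
        = ∑ i ∈ Finset.range (m + 1), (-1:ℝ)^i * (m.choose i : ℝ) * max (t - i) 0 ^ (m+1)
          - (-1:ℝ)^0 * (m.choose 0 : ℝ) * max (t - (0:ℕ)) 0 ^ (m+1) := by
      have := Finset.sum_range_succ' (fun i => (-1:ℝ)^i * (m.choose i : ℝ) * max (t - i) 0 ^ (m+1)) m
      have hm1 : (m.choose (m+1) : ℝ) = 0 := by rw [Nat.choose_eq_zero_of_lt (by omega)]; simp
      rw [Finset.sum_range_succ (fun i => (-1:ℝ)^(i+1) * (m.choose (i+1) : ℝ) * max (t - (i+1:ℕ)) 0 ^ (m+1)) m]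
      rw [hm1]
      rw [this]
      ring
    have hB : ∑ i ∈ Finset.range (m + 1), (-1:ℝ)^(i+1) * (m.choose i : ℝ) * max (t - (i+1:ℕ)) 0 ^ (m+1)
        = - ∑ i ∈ Finset.range (m + 1), (-1:ℝ)^i * (m.choose i : ℝ) * max (t - 1 - i) 0 ^ (m+1) := by
      rw [← Finset.sum_neg_distrib]
      apply Finset.sum_congr rfl
      intro i _
      have : t - ((i:ℝ)+1) = t - 1 - i := by ring
      push_cast
      rw [this]; ring
    rw [hA, hB]
    simp only [Nat.choose_zero_right, Nat.cast_one, Nat.cast_zero, pow_zero]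
    ring
  rw [key]

def cubeSum (m : ℕ) (t : ℝ) : Set (Fin m → ℝ) :=
  {y | (∀ i, 0 ≤ y i ∧ y i < 1) ∧ ∑ i, y i ≤ t}

lemma measurableSet_cubeSum (m : ℕ) (t : ℝ) : MeasurableSet (cubeSum m t) := by
  have : cubeSum m t = (⋂ i, (fun y : Fin m → ℝ => y i) ⁻¹' Set.Ico (0:ℝ) 1)
      ∩ {y | ∑ i, y i ≤ t} := by
    ext y
    simp [cubeSum, Set.mem_Ico, forall_and]
  rw [this]
  exact (MeasurableSet.iInter fun i => (measurable_pi_apply i) measurableSet_Ico).inter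
    (measurableSet_le (Finset.measurable_sum _ fun i _ => measurable_pi_apply i)
      measurable_const)

lemma cubeSum_rec (m : ℕ) (t : ℝ) :
    volume (cubeSum (m + 1) t) = ∫⁻ s in Set.Ico (0:ℝ) 1, volume (cubeSum m (t - s)) := by
  classical
  set e := MeasurableEquiv.piFinSuccAbove (fun _ : Fin (m + 1) => ℝ) 0 with he
  have hmp := volume_preserving_piFinSuccAbove (fun _ : Fin (m + 1) => ℝ) 0
  set T : Set (ℝ × (Fin m → ℝ)) :=
    {p | (0 ≤ p.1 ∧ p.1 < 1) ∧ (∀ i, 0 ≤ p.2 i ∧ p.2 i < 1) ∧ p.1 + ∑ i, p.2 i ≤ t} with hT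
  have hTmeas : MeasurableSet T := by
    have : T = ((fun p : ℝ × (Fin m → ℝ) => p.1) ⁻¹' Set.Ico (0:ℝ) 1)
        ∩ ((⋂ i, (fun p : ℝ × (Fin m → ℝ) => p.2 i) ⁻¹' Set.Ico (0:ℝ) 1)
          ∩ {p : ℝ × (Fin m → ℝ) | p.1 + ∑ i, p.2 i ≤ t}) := by
      ext y; simp [hT, Set.mem_Ico, forall_and]
    rw [this]
    refine (measurable_fst measurableSet_Ico).inter
      ((MeasurableSet.iInter fun i => ((measurable_pi_apply i).comp measurable_snd) measurableSet_Ico).inter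
        (measurableSet_le (measurable_fst.add
          (Finset.measurable_sum _ fun i _ => (measurable_pi_apply i).comp measurable_snd))
          measurable_const))
  have hpre : ⇑e ⁻¹' T = cubeSum (m + 1) t := by
    ext f
    have hcoe : e f = (f 0, fun j => f (Fin.succAbove 0 j)) := rfl
    simp only [Set.mem_preimage, hcoe, hT, Set.mem_setOf_eq, cubeSum]
    rw [Fin.forall_fin_succ, Fin.sum_univ_succ]
    simp [Fin.succAbove_zero]
    tauto
  have hmain := hmp.measure_preimage hTmeas.nullMeasurableSet
  rw [hpre] at hmain
  rw [hmain, Measure.volume_eq_prod, Measure.prod_apply hTmeas]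
  have hsec : ∀ x : ℝ, volume (Prod.mk x ⁻¹' T)
      = Set.indicator (Set.Ico (0:ℝ) 1) (fun s => volume (cubeSum m (t - s))) x := by
    intro x
    by_cases hx : x ∈ Set.Ico (0:ℝ) 1
    · rw [Set.indicator_of_mem hx]
      congr 1
      ext y
      simp only [Set.mem_preimage, hT, Set.mem_setOf_eq, cubeSum, Set.mem_Ico] at *
      constructor
      · rintro ⟨_, h2, h3⟩; exact ⟨h2, by linarith⟩
      · rintro ⟨h2, h3⟩; exact ⟨hx, h2, by linarith⟩
    · rw [Set.indicator_of_notMem hx]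
      convert measure_empty
      · ext y
        simp only [Set.mem_preimage, hT, Set.mem_setOf_eq, Set.mem_empty_iff_false, iff_false]
        rintro ⟨h1, _, _⟩
        exact hx h1
      · infer_instance
  rw [lintegral_congr hsec, lintegral_indicator measurableSet_Ico]

lemma Ufun_one (t : ℝ) : Ufun 1 t = max t 0 - max (t - 1) 0 := by
  simp [Ufun, Finset.sum_range_succ]; ring

lemma Ufun_one_nonneg (t : ℝ) : 0 ≤ Ufun 1 t := by
  rw [Ufun_one]
  have : max (t - 1) 0 ≤ max t 0 := max_le_max (by linarith) le_rfl
  linarith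

lemma cubeSum_one (t : ℝ) : volume (cubeSum 1 t) = ENNReal.ofReal (Ufun 1 t) := by
  have hmp := volume_preserving_funUnique (Fin 1) ℝ
  have hpre : ⇑(MeasurableEquiv.funUnique (Fin 1) ℝ) ⁻¹' (Set.Ico (0:ℝ) 1 ∩ Set.Iic t)
      = cubeSum 1 t := by
    ext f
    have : (MeasurableEquiv.funUnique (Fin 1) ℝ) f = f 0 := rfl
    simp [this, cubeSum, Fin.forall_fin_one, Fin.sum_univ_one, Set.mem_Ico, and_assoc]
  have hmain := hmp.measure_preimage
    (s := Set.Ico (0:ℝ) 1 ∩ Set.Iic t)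
    ((measurableSet_Ico.inter measurableSet_Iic).nullMeasurableSet)
  rw [hpre] at hmain
  refine hmain.trans ?_
  rw [Ufun_one]
  rcases lt_or_ge t 0 with h | h
  · have : Set.Ico (0:ℝ) 1 ∩ Set.Iic t = ∅ := by
      ext x; simp [Set.mem_Ico, Set.mem_Iic]; intro hx _; linarith
    rw [this]
    rw [max_eq_right (by linarith), max_eq_right (by linarith)]
    simp
  · rcases lt_or_ge t 1 with h1 | h1
    · have : Set.Ico (0:ℝ) 1 ∩ Set.Iic t = Set.Icc 0 t := by
        ext x
        simp only [Set.mem_inter_iff, Set.mem_Ico, Set.mem_Iic, Set.mem_Icc]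
        constructor
        · rintro ⟨⟨u, _⟩, w⟩; exact ⟨u, w⟩
        · rintro ⟨u, w⟩; exact ⟨⟨u, by linarith⟩, w⟩
      rw [this, Real.volume_Icc, max_eq_left h, max_eq_right (by linarith)]
    · have : Set.Ico (0:ℝ) 1 ∩ Set.Iic t = Set.Ico 0 1 := by
        rw [Set.inter_eq_left]
        intro x hx
        simp only [Set.mem_Ico] at hx
        simp only [Set.mem_Iic]
        linarith [hx.2]
      rw [this, Real.volume_Ico, max_eq_left h, max_eq_left (by linarith)]
      norm_num

lemma Ufun_prop : ∀ m : ℕ, 1 ≤ m →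
    (∀ t, 0 ≤ Ufun m t) ∧ (∀ t, volume (cubeSum m t) = ENNReal.ofReal (Ufun m t)) := by
  intro m hm
  induction m, hm using Nat.le_induction with
  | base => exact ⟨Ufun_one_nonneg, cubeSum_one⟩
  | succ m hm ih =>
    obtain ⟨hU, hV⟩ := ih
    have key : ∀ t : ℝ, ∫ s in (0:ℝ)..1, Ufun m (t - s) = Ufun (m + 1) t := by
      intro t
      rw [intervalIntegral.integral_comp_sub_left (Ufun m) t]
      simp only [sub_zero]
      have : ∫ u in (t-1)..t, Ufun m u = Wfun m t - Wfun m (t - 1) :=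
        intervalIntegral.integral_eq_sub_of_hasDerivAt
          (fun x _ => hasDerivAt_Wfun m hm x)
          ((continuous_Ufun m).intervalIntegrable _ _)
      rw [this, pascal_W]
    constructor
    · intro t
      rw [← key t]
      exact intervalIntegral.integral_nonneg (by norm_num) (fun s _ => hU _)
    · intro t
      rw [cubeSum_rec]
      have h1 : ∫⁻ s in Set.Ico (0:ℝ) 1, volume (cubeSum m (t - s))
          = ∫⁻ s in Set.Ico (0:ℝ) 1, ENNReal.ofReal (Ufun m (t - s)) :=
        lintegral_congr fun s => by rw [hV]
      rw [h1, Measure.restrict_congr_set Ico_ae_eq_Ioc]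
      have hint : IntegrableOn (fun s => Ufun m (t - s)) (Set.Ioc (0:ℝ) 1) volume :=
        ((continuous_Ufun m).comp (continuous_const.sub continuous_id)).integrableOn_Ioc
      have h2 := ofReal_integral_eq_lintegral_ofReal hint
        (Filter.Eventually.of_forall fun s => hU _)
      rw [← h2, ← intervalIntegral.integral_of_le (zero_le_one), key t]

lemma slab_volume (m : ℕ) (hm : 1 ≤ m) (t : ℝ) :
    volume {y : Fin m → ℝ | (∀ i, 0 ≤ y i ∧ y i < 1) ∧ t - 1 < ∑ i, y i ∧ ∑ i, y i ≤ t}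
      = ENNReal.ofReal (Ufun m t - Ufun m (t - 1)) := by
  obtain ⟨hU, hV⟩ := Ufun_prop m hm
  have hset : {y : Fin m → ℝ | (∀ i, 0 ≤ y i ∧ y i < 1) ∧ t - 1 < ∑ i, y i ∧ ∑ i, y i ≤ t}
      = cubeSum m t \ cubeSum m (t - 1) := by
    ext y
    simp only [Set.mem_setOf_eq, Set.mem_diff, cubeSum]
    constructor
    · rintro ⟨hc, h1, h2⟩
      exact ⟨⟨hc, h2⟩, fun hcon => absurd hcon.2 (not_le.mpr h1)⟩
    · rintro ⟨⟨hc, h2⟩, hn⟩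
      exact ⟨hc, not_le.mp (fun hle => hn ⟨hc, hle⟩), h2⟩
  have hsub : cubeSum m (t - 1) ⊆ cubeSum m t := fun y hy => ⟨hy.1, by linarith [hy.2]⟩
  have hfin : volume (cubeSum m (t - 1)) ≠ ⊤ := by
    rw [hV]; exact ENNReal.ofReal_ne_top
  rw [hset, measure_diff hsub (measurableSet_cubeSum m (t - 1)).nullMeasurableSet hfin,
    hV, hV, ENNReal.ofReal_sub _ (hU _)]

/-- for `n ≥ 2`, `0 ≤ a < 1` and an integer `1 ≤ k ≤ n−1`, the Lebesgue measure
of `{(x_1,…,x_{n−1}) ∈ [a,1)^{n−1} : k − 1 < Σ x_i ≤ k − a}` equals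
`(1−a)^{n−1} (U_{n−1}((k−na)/(1−a)) − U_{n−1}((k−na)/(1−a) − 1))`. -/
theorem statement4 (n : ℕ) (hn : 2 ≤ n) (a : ℝ) (ha0 : 0 ≤ a) (ha1 : a < 1)
    (k : ℤ) (hk1 : 1 ≤ k) (hkn : k ≤ (n : ℤ) - 1) :
    volume {x : Fin (n - 1) → ℝ | (∀ i, a ≤ x i ∧ x i < 1) ∧
        (k : ℝ) - 1 < ∑ i, x i ∧ ∑ i, x i ≤ (k : ℝ) - a} =
      ENNReal.ofReal ((1 - a) ^ (n - 1) *
        (Ufun (n - 1) (((k : ℝ) - n * a) / (1 - a)) -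
          Ufun (n - 1) (((k : ℝ) - n * a) / (1 - a) - 1))) := by
  obtain ⟨m, rfl⟩ : ∃ m, n = m + 1 := ⟨n - 1, by omega⟩
  have hm : 1 ≤ m := by omega
  show volume {x : Fin m → ℝ | (∀ i, a ≤ x i ∧ x i < 1) ∧
        (k : ℝ) - 1 < ∑ i, x i ∧ ∑ i, x i ≤ (k : ℝ) - a} =
      ENNReal.ofReal ((1 - a) ^ m *
        (Ufun m (((k : ℝ) - ((m + 1 : ℕ) : ℝ) * a) / (1 - a)) -
          Ufun m (((k : ℝ) - ((m + 1 : ℕ) : ℝ) * a) / (1 - a) - 1)))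
  set r : ℝ := 1 - a with hr_def
  have hr : 0 < r := by simp [hr_def]; linarith
  have hr0 : r ≠ 0 := ne_of_gt hr
  set K : ℝ := (k : ℝ) with hK
  set t : ℝ := (K - (m + 1 : ℕ) * a) / r with ht
  set S : Set (Fin m → ℝ) :=
    {y | (∀ i, 0 ≤ y i ∧ y i < 1) ∧ t - 1 < ∑ i, y i ∧ ∑ i, y i ≤ t} with hS
  have hset : {x : Fin m → ℝ | (∀ i, a ≤ x i ∧ x i < 1) ∧
      K - 1 < ∑ i, x i ∧ ∑ i, x i ≤ K - a} = (fun _ : Fin m => a) +ᵥ (r • S) := by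
    ext x
    rw [Set.mem_vadd_set_iff_neg_vadd_mem, Set.mem_smul_set_iff_inv_smul_mem₀ hr0]
    have happ : ∀ i, (r⁻¹ • (-(fun _ : Fin m => a) +ᵥ x)) i = (x i - a) / r := by
      intro i
      simp only [Pi.smul_apply, smul_eq_mul, vadd_eq_add, Pi.add_apply, Pi.neg_apply]
      rw [div_eq_inv_mul]; ring
    have hcast : ((m + 1 : ℕ) : ℝ) = (m : ℝ) + 1 := by push_cast; ring
    have ht1 : t - 1 = (K - (m + 1 : ℕ) * a - r) / r := by
      rw [ht]; field_simp
    simp only [Set.mem_setOf_eq, hS, happ]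
    have hsum : ∑ i, (x i - a) / r = ((∑ i, x i) - m * a) / r := by
      rw [← Finset.sum_div, Finset.sum_sub_distrib, Finset.sum_const, Finset.card_univ,
        Fintype.card_fin]
      simp [nsmul_eq_mul]
    rw [hsum]
    constructor
    · rintro ⟨hc, h1, h2⟩
      refine ⟨fun i => ⟨div_nonneg (by linarith [(hc i).1]) hr.le,
        (div_lt_one hr).mpr (by linarith [(hc i).2])⟩, ?_, ?_⟩
      · rw [ht1, div_lt_div_iff_of_pos_right hr]
        rw [hcast]
        linarith
      · rw [ht, div_le_div_iff_of_pos_right hr]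
        rw [hcast]
        linarith
    · rintro ⟨hc, h1, h2⟩
      rw [ht1, div_lt_div_iff_of_pos_right hr, hcast] at h1
      rw [ht, div_le_div_iff_of_pos_right hr, hcast] at h2
      refine ⟨fun i => ?_, by linarith, by linarith⟩
      obtain ⟨hi1, hi2⟩ := hc i
      rw [div_lt_one hr] at hi2
      constructor
      · have := (le_div_iff₀ hr).mp hi1; linarith
      · linarith
  rw [hset, measure_vadd, Measure.addHaar_smul, slab_volume m hm t]
  rw [Module.finrank_pi, Fintype.card_fin]
  rw [abs_of_nonneg (pow_nonneg hr.le m)]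
  rw [← ENNReal.ofReal_mul (pow_nonneg hr.le m)]
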